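/- arXiv:1912.11988 — 9 statements merged into one kernel-verified Lean document; each statement's English description precedes it below -/
import Mathlib

section
/- The maps η_X(x) = [x] (the open filter of open neighborhoods of x) and μ_X(α) = {A ∈ O(X) | φ(A) ∈ α} are natural transformations making (Φ, η, μ) a monad on the category of T0 topological spaces; in particular the monad laws μ ∘ Φμ = μ ∘ μΦ and μ ∘ ηΦ = id = μ ∘ Φη hold. -/
open Set TopologicalSpace

variable {X Y : Type*}

/-- An open filter on a topological space: a lattice-theoretic filter of the
frame of open sets (so it contains `univ` and satisfies
`A ∩ B ∈ v ↔ A ∈ v ∧ B ∈ v` for open `A`, `B`). -/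
def IsOpenFilter [TopologicalSpace X] (v : Set (Set X)) : Prop :=
  (∀ A ∈ v, IsOpen A) ∧ Set.univ ∈ v ∧
    ∀ A B : Set X, IsOpen A → IsOpen B → (A ∩ B ∈ v ↔ A ∈ v ∧ B ∈ v)

/-- `Φ(X)`: the set of open filters of `X`, ordered by inclusion. -/
abbrev OF (X : Type*) [TopologicalSpace X] := {v : Set (Set X) // IsOpenFilter v}

/-- The basic open sets `φ(A) = {v ∈ Φ(X) | A ∈ v}` of the filter space. -/
def phi [TopologicalSpace X] (A : Set X) : Set (OF X) := {v : OF X | A ∈ v.1}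

/-- The topology on `Φ(X)` generated by the sets `φ(A)`, `A` open. -/
instance OF.topologicalSpace (X : Type*) [TopologicalSpace X] : TopologicalSpace (OF X) :=
  generateFrom {S | ∃ A : Set X, IsOpen A ∧ S = phi A}

lemma isOpen_phi [TopologicalSpace X] {A : Set X} (hA : IsOpen A) : IsOpen (phi A) :=
  TopologicalSpace.GenerateOpen.basic _ ⟨A, hA, rfl⟩

lemma phi_univ [TopologicalSpace X] : phi (Set.univ : Set X) = Set.univ :=
  Set.eq_univ_of_forall fun v => v.2.2.1

lemma phi_inter [TopologicalSpace X] {A B : Set X} (hA : IsOpen A) (hB : IsOpen B) :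
    phi (A ∩ B) = phi A ∩ phi B :=
  Set.ext fun v => v.2.2.2 A B hA hB

/-- The open-neighborhood filter `[x]` of a point: the unit `η_X`. -/
def etaOF [TopologicalSpace X] (x : X) : OF X :=
  ⟨{A | IsOpen A ∧ x ∈ A}, fun _ hA => hA.1, ⟨isOpen_univ, mem_univ x⟩,
    fun A B hA hB =>
      ⟨fun h => ⟨⟨hA, h.2.1⟩, ⟨hB, h.2.2⟩⟩, fun h => ⟨hA.inter hB, h.1.2, h.2.2⟩⟩⟩

/-- The open filter `[S] = {B open | S ⊆ B}` of a subset `S`. -/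
def nbhdOF [TopologicalSpace X] (S : Set X) : OF X :=
  ⟨{B | IsOpen B ∧ S ⊆ B}, fun _ hA => hA.1, ⟨isOpen_univ, subset_univ S⟩,
    fun A B hA hB =>
      ⟨fun h => ⟨⟨hA, h.2.trans inter_subset_left⟩, ⟨hB, h.2.trans inter_subset_right⟩⟩,
       fun h => ⟨hA.inter hB, subset_inter h.1.2 h.2.2⟩⟩⟩

/-- The action of `Φ` on a continuous map: `Φ(f)(u) = {B open | f⁻¹(B) ∈ u}`. -/
def mapOF [TopologicalSpace X] [TopologicalSpace Y] (f : X → Y) (hf : Continuous f) :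
    OF X → OF Y := fun u =>
  ⟨{B | IsOpen B ∧ f ⁻¹' B ∈ u.1}, fun _ hA => hA.1,
    ⟨isOpen_univ, by simpa using u.2.2.1⟩,
    fun A B hA hB => by
      constructor
      · intro h
        have := (u.2.2.2 (f ⁻¹' A) (f ⁻¹' B) (hA.preimage hf) (hB.preimage hf)).1
          (by simpa [Set.preimage_inter] using h.2)
        exact ⟨⟨hA, this.1⟩, ⟨hB, this.2⟩⟩
      · intro h
        refine ⟨hA.inter hB, ?_⟩
        rw [Set.preimage_inter]
        exact (u.2.2.2 _ _ (hA.preimage hf) (hB.preimage hf)).2 ⟨h.1.2, h.2.2⟩⟩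

/-- The multiplication `μ_X(α) = {A open | φ(A) ∈ α}` of the open filter monad. -/
def muOF [TopologicalSpace X] : OF (OF X) → OF X := fun α =>
  ⟨{A | IsOpen A ∧ phi A ∈ α.1}, fun _ hA => hA.1,
    ⟨isOpen_univ, by rw [phi_univ]; exact α.2.2.1⟩,
    fun A B hA hB => by
      constructor
      · intro h
        have := (α.2.2.2 (phi A) (phi B) (isOpen_phi hA) (isOpen_phi hB)).1
          (by rw [← phi_inter hA hB]; exact h.2)
        exact ⟨⟨hA, this.1⟩, ⟨hB, this.2⟩⟩
      · intro h
        exact ⟨hA.inter hB, by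
          rw [phi_inter hA hB]
          exact (α.2.2.2 _ _ (isOpen_phi hA) (isOpen_phi hB)).2 ⟨h.1.2, h.2.2⟩⟩⟩

lemma mapOF_preimage_phi [TopologicalSpace X] [TopologicalSpace Y] (f : X → Y)
    (hf : Continuous f) {B : Set Y} (hB : IsOpen B) :
    mapOF f hf ⁻¹' phi B = phi (f ⁻¹' B) := by
  ext u; simp [phi, mapOF, hB]

lemma continuous_of_phi_preimage [TopologicalSpace X] [TopologicalSpace Y]
    {g : X → OF Y} (h : ∀ B : Set Y, IsOpen B → IsOpen (g ⁻¹' phi B)) : Continuous g := by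
  apply continuous_generateFrom_iff.2
  rintro S ⟨B, hB, rfl⟩
  exact h B hB

lemma etaOF_preimage_phi [TopologicalSpace X] {A : Set X} (hA : IsOpen A) :
    (etaOF : X → OF X) ⁻¹' phi A = A := by
  ext x; simp [phi, etaOF, hA]

lemma muOF_preimage_phi [TopologicalSpace X] {A : Set X} (hA : IsOpen A) :
    (muOF : OF (OF X) → OF X) ⁻¹' phi A = phi (phi A) := by
  ext α; simp [phi, muOF, hA]

universe u

/-- `η` and `μ` are (continuous) natural transformations and
`(Φ, η, μ)` is a monad on `T0` spaces: the monad laws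
`μ ∘ Φμ = μ ∘ μΦ` and `μ ∘ ηΦ = id = μ ∘ Φη` hold. -/
theorem openFilterMonad {X Y : Type u} [TopologicalSpace X] [TopologicalSpace Y]
    [T0Space X] [T0Space Y] (f : X → Y) (hf : Continuous f) :
    ∃ (hΦ : ∀ {Z W : Type u} [TopologicalSpace Z] [TopologicalSpace W]
        (g : Z → W) (hg : Continuous g), Continuous (mapOF g hg))
      (hη : ∀ (Z : Type u) [TopologicalSpace Z], Continuous (etaOF : Z → OF Z))
      (hμ : ∀ (Z : Type u) [TopologicalSpace Z], Continuous (muOF : OF (OF Z) → OF Z)),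
      -- naturality of η
      (∀ x : X, mapOF f hf (etaOF x) = etaOF (f x)) ∧
      -- naturality of μ
      (∀ α : OF (OF X), mapOF f hf (muOF α) = muOF (mapOF (mapOF f hf) (hΦ f hf) α)) ∧
      -- associativity law: μ ∘ Φμ = μ ∘ μΦ
      (∀ β : OF (OF (OF X)), muOF (mapOF muOF (hμ X) β) = muOF (muOF β)) ∧
      -- unit laws: μ ∘ ηΦ = id = μ ∘ Φη
      (∀ v : OF X, muOF (etaOF v) = v) ∧
      (∀ v : OF X, muOF (mapOF etaOF (hη X) v) = v) := by
  have hΦ : ∀ {Z W : Type u} [TopologicalSpace Z] [TopologicalSpace W]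
      (g : Z → W) (hg : Continuous g), Continuous (mapOF g hg) := by
    intro Z W _ _ g hg
    exact continuous_of_phi_preimage fun B hB => by
      rw [mapOF_preimage_phi g hg hB]; exact isOpen_phi (hB.preimage hg)
  have hη : ∀ (Z : Type u) [TopologicalSpace Z], Continuous (etaOF : Z → OF Z) := by
    intro Z _
    exact continuous_of_phi_preimage fun B hB => by rw [etaOF_preimage_phi hB]; exact hB
  have hμ : ∀ (Z : Type u) [TopologicalSpace Z], Continuous (muOF : OF (OF Z) → OF Z) := by
    intro Z _
    exact continuous_of_phi_preimage fun B hB => by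
      rw [muOF_preimage_phi hB]; exact isOpen_phi (isOpen_phi hB)
  refine ⟨hΦ, hη, hμ, ?_, ?_, ?_, ?_, ?_⟩
  · intro x
    apply Subtype.ext
    ext B
    simp only [mapOF, etaOF, Set.mem_setOf_eq, Set.mem_preimage]
    exact ⟨fun h => ⟨h.1, h.2.2⟩, fun h => ⟨h.1, h.1.preimage hf, h.2⟩⟩
  · intro α
    apply Subtype.ext
    ext B
    simp only [mapOF, muOF, Set.mem_setOf_eq]
    constructor
    · intro ⟨hB, _, h⟩
      refine ⟨hB, isOpen_phi hB, ?_⟩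
      rwa [mapOF_preimage_phi f hf hB]
    · intro ⟨hB, _, h⟩
      rw [mapOF_preimage_phi f hf hB] at h
      exact ⟨hB, hB.preimage hf, h⟩
  · intro β
    apply Subtype.ext
    ext A
    simp only [muOF, mapOF, Set.mem_setOf_eq]
    constructor
    · intro ⟨hA, _, h⟩
      rw [muOF_preimage_phi hA] at h
      exact ⟨hA, isOpen_phi hA, h⟩
    · intro ⟨hA, _, h⟩
      refine ⟨hA, isOpen_phi hA, ?_⟩
      rwa [muOF_preimage_phi hA]
  · intro v
    apply Subtype.ext
    ext A
    simp only [muOF, etaOF, Set.mem_setOf_eq, phi]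
    exact ⟨fun h => h.2.2, fun h => ⟨v.2.1 A h, isOpen_phi (v.2.1 A h), h⟩⟩
  · intro v
    apply Subtype.ext
    ext A
    simp only [muOF, mapOF, Set.mem_setOf_eq]
    constructor
    · intro ⟨hA, _, h⟩
      rwa [etaOF_preimage_phi hA] at h
    · intro h
      have hA := v.2.1 A h
      exact ⟨hA, isOpen_phi hA, by rwa [etaOF_preimage_phi hA]⟩
end

section
/- For an open filter v on a complete lattice X with its Scott topology, the set v↓ = ⋃_{A ∈ v} A↓, where A↓ = {y | A ⊆ ↑y}, is an ideal of X. -/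
open Set TopologicalSpace

variable {X Y : Type*}

/-- An ideal of a poset: a nonempty directed lower set. -/
def IsIdeal [Preorder X] (I : Set X) : Prop :=
  I.Nonempty ∧ DirectedOn (· ≤ ·) I ∧ IsLowerSet I

/-- The way-below relation on a complete lattice:
`x ≪ y` iff every ideal whose sup dominates `y` contains `x`. -/
def wayBelow [CompleteLattice X] (x y : X) : Prop :=
  ∀ I : Set X, IsIdeal I → y ≤ sSup I → x ∈ I

/-- A continuous lattice: every element is the sup of the elements way below it. -/
def IsContinuousLattice (X : Type*) [CompleteLattice X] : Prop :=
  ∀ x : X, x = sSup {y | wayBelow y x}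

/-- The Scott topology on a complete lattice: open sets are the upper sets
inaccessible by sups of ideals. -/
instance scottTop (X : Type*) [CompleteLattice X] : TopologicalSpace X where
  IsOpen U := IsUpperSet U ∧ ∀ I : Set X, IsIdeal I → sSup I ∈ U → (I ∩ U).Nonempty
  isOpen_univ := ⟨isUpperSet_univ, fun I hI _ => hI.1.imp fun _ ha => ⟨ha, trivial⟩⟩
  isOpen_inter U V hU hV := ⟨hU.1.inter hV.1, fun I hI hs => by
    obtain ⟨a, haI, haU⟩ := hU.2 I hI hs.1
    obtain ⟨b, hbI, hbV⟩ := hV.2 I hI hs.2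
    obtain ⟨c, hcI, hac, hbc⟩ := hI.2.1 a haI b hbI
    exact ⟨c, hcI, hU.1 hac haU, hV.1 hbc hbV⟩⟩
  isOpen_sUnion S hS := ⟨isUpperSet_sUnion fun s hs => (hS s hs).1, fun I hI hm => by
    obtain ⟨U, hU, hsU⟩ := hm
    obtain ⟨a, haI, haU⟩ := (hS U hU).2 I hI hsU
    exact ⟨a, haI, U, hU, haU⟩⟩

/-- `v↓ = ⋃_{A ∈ v} A↓` where `A↓ = {y | A ⊆ ↑y}`. -/
def downOf [CompleteLattice X] (v : Set (Set X)) : Set X :=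
  {y | ∃ A ∈ v, A ⊆ Set.Ici y}

/-- for an open filter `v` on a complete lattice with its Scott
topology, `v↓` is an ideal. -/
theorem downOf_isIdeal [CompleteLattice X] (v : Set (Set X)) (hv : IsOpenFilter v) :
    IsIdeal (downOf v) := by
  obtain ⟨hopen, huniv, hinter⟩ := hv
  refine ⟨⟨⊥, Set.univ, huniv, fun x _ => bot_le⟩, ?_, ?_⟩
  · rintro y ⟨A, hA, hAy⟩ z ⟨B, hB, hBz⟩
    refine ⟨y ⊔ z, ⟨A ∩ B, ((hinter A B (hopen A hA) (hopen B hB)).mpr ⟨hA, hB⟩),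
      fun x hx => sup_le (hAy hx.1) (hBz hx.2)⟩, le_sup_left, le_sup_right⟩
  · rintro a b hba ⟨A, hA, hAa⟩
    exact ⟨A, hA, fun x hx => hba.trans (hAa hx)⟩
end

section
/- A complete lattice X is a continuous lattice if and only if for every x ∈ X, x = ⋁ [x]↓, where [x] is the Scott-open neighborhood filter of x and [x]↓ = ⋃_{A ∈ [x]} {y | A ⊆ ↑y}. -/
open Set TopologicalSpace

variable {X Y : Type*}

lemma scott_isOpen_iff [CompleteLattice X] (U : Set X) :
    IsOpen U ↔ IsUpperSet U ∧ ∀ I : Set X, IsIdeal I → sSup I ∈ U → (I ∩ U).Nonempty :=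
  Iff.rfl

lemma isIdeal_Iic [CompleteLattice X] (x : X) : IsIdeal (Set.Iic x) :=
  ⟨⟨x, le_refl x⟩, fun a ha b hb => ⟨x, le_refl x, ha, hb⟩, fun a b hba ha => le_trans hba ha⟩

lemma wayBelow_le [CompleteLattice X] {y x : X} (h : wayBelow y x) : y ≤ x :=
  h (Set.Iic x) (isIdeal_Iic x) (le_sSup (le_refl x))

lemma wayBelow_of_le [CompleteLattice X] {z y x : X} (hzy : z ≤ y) (h : wayBelow y x) :
    wayBelow z x := fun I hI hx => hI.2.2 hzy (h I hI hx)

lemma wayBelow_mono [CompleteLattice X] {y x x' : X} (h : wayBelow y x) (hx : x ≤ x') :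
    wayBelow y x' := fun I hI hx' => h I hI (le_trans hx hx')

lemma wayBelow_sup [CompleteLattice X] {a b x : X} (ha : wayBelow a x) (hb : wayBelow b x) :
    wayBelow (a ⊔ b) x := by
  intro I hI hx
  obtain ⟨c, hcI, hac, hbc⟩ := hI.2.1 a (ha I hI hx) b (hb I hI hx)
  exact hI.2.2 (sup_le hac hbc) hcI

lemma wayBelow_bot [CompleteLattice X] (x : X) : wayBelow ⊥ x := by
  intro I hI _
  obtain ⟨a, haI⟩ := hI.1
  exact hI.2.2 bot_le haI

/-- Interpolation in a continuous lattice. -/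
lemma interpolation [CompleteLattice X] (hc : IsContinuousLattice X) {z x : X}
    (h : wayBelow z x) : ∃ b, wayBelow z b ∧ wayBelow b x := by
  set D : Set X := {a | ∃ b, wayBelow a b ∧ wayBelow b x} with hD
  have hideal : IsIdeal D := by
    refine ⟨⟨⊥, ⊥, wayBelow_bot ⊥, wayBelow_bot x⟩, ?_, ?_⟩
    · rintro a ⟨b1, hab1, hb1⟩ a' ⟨b2, hab2, hb2⟩
      exact ⟨a ⊔ a', ⟨b1 ⊔ b2, wayBelow_sup (wayBelow_mono hab1 le_sup_left)
        (wayBelow_mono hab2 le_sup_right), wayBelow_sup hb1 hb2⟩, le_sup_left, le_sup_right⟩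
    · rintro a a' ha'a ⟨b, hab, hb⟩
      exact ⟨b, wayBelow_of_le ha'a hab, hb⟩
  have hsup : x ≤ sSup D := by
    calc x = sSup {y | wayBelow y x} := hc x
    _ ≤ sSup D := by
        apply sSup_le
        intro b hb
        calc b = sSup {a | wayBelow a b} := hc b
        _ ≤ sSup D := sSup_le_sSup fun a ha => ⟨b, ha, hb⟩
  exact h D hideal hsup

/-- In a continuous lattice, `{w | z ≪ w}` is Scott-open. -/
lemma isOpen_wayBelow [CompleteLattice X] (hc : IsContinuousLattice X) (z : X) :
    IsOpen {w | wayBelow z w} := by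
  rw [scott_isOpen_iff]
  refine ⟨fun a b hab ha => wayBelow_mono ha hab, ?_⟩
  intro I hI hs
  obtain ⟨b, hzb, hbs⟩ := interpolation hc hs
  exact ⟨b, hbs I hI le_rfl, hzb⟩

/-- a complete lattice is continuous iff `x = ⋁ [x]↓` for every `x`,
where `[x]` is the Scott-open neighborhood filter of `x`. -/
theorem isContinuousLattice_iff_sSup_downOf_nhds [CompleteLattice X] :
    IsContinuousLattice X ↔
      ∀ x : X, x = sSup (downOf {A : Set X | IsOpen A ∧ x ∈ A}) := by
  constructor
  · intro hc x
    refine le_antisymm ?_ ?_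
    · conv_lhs => rw [hc x]
      apply sSup_le
      intro y hy
      obtain ⟨b, hyb, hbx⟩ := interpolation hc hy
      exact le_sSup ⟨{w | wayBelow b w}, ⟨isOpen_wayBelow hc b, hbx⟩,
        fun w hw => wayBelow_le (wayBelow_of_le (wayBelow_le hyb) hw)⟩
    · apply sSup_le
      rintro y ⟨A, ⟨hAopen, hxA⟩, hsub⟩
      exact hsub hxA
  · intro h x
    refine le_antisymm ?_ (sSup_le fun y hy => wayBelow_le hy)
    conv_lhs => rw [h x]
    apply sSup_le_sSup
    rintro y ⟨A, ⟨hAopen, hxA⟩, hsub⟩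
    intro I hI hx
    have hU := (scott_isOpen_iff A).mp hAopen
    obtain ⟨a, haI, haA⟩ := hU.2 I hI (hU.1 hx hxA)
    exact hI.2.2 (hsub haA) haI
end

section
/- Let X be a continuous lattice with Scott topology and r : Φ(X) → X defined by r(v) = ⋁ v↓. Then for every Scott-open set A, r⁻¹(A) ⊆ φ(A). -/
open Set TopologicalSpace

variable {X Y : Type*}

/-- for a continuous lattice with the Scott topology and
`r(v) = ⋁ v↓`, one has `r⁻¹(A) ⊆ φ(A)` for every Scott-open `A`. -/
theorem preimage_r_subset_phi [CompleteLattice X] (h : IsContinuousLattice X)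
    (A : Set X) (hA : IsOpen A) :
    (fun v : OF X => sSup (downOf v.1)) ⁻¹' A ⊆ phi A := by
  intro v hv
  obtain ⟨hop, huniv, hinter⟩ := v.2
  -- downOf v.1 is an ideal
  have hI : IsIdeal (downOf v.1) := by
    refine ⟨⟨⊥, Set.univ, huniv, fun x _ => bot_le⟩, ?_, ?_⟩
    · rintro a ⟨B, hB, hBa⟩ b ⟨C, hC, hCb⟩
      refine ⟨a ⊔ b, ⟨B ∩ C, ?_, ?_⟩, le_sup_left, le_sup_right⟩
      · exact (hinter B C (hop B hB) (hop C hC)).2 ⟨hB, hC⟩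
      · rintro x ⟨hxB, hxC⟩
        exact sup_le (hBa hxB) (hCb hxC)
    · rintro a b hba ⟨B, hB, hBa⟩
      exact ⟨B, hB, fun x hx => le_trans hba (hBa hx)⟩
  obtain ⟨y, ⟨B, hB, hBy⟩, hyA⟩ := hA.2 _ hI hv
  have hBA : B ⊆ A := fun x hx => hA.1 (hBy hx) hyA
  have : A ∩ B = B := Set.inter_eq_self_of_subset_right hBA
  have hAB : A ∩ B ∈ v.1 := this.symm ▸ hB
  exact ((hinter A B hA (hop B hB)).1 hAB).1
end

section
/- Let X be a continuous lattice with Scott topology and r(v) = ⋁ v↓ for open filters v. For every Scott-open set A and every x ∈ X with x ≪ ⋀A, one has φ(A) ⊆ r⁻¹(⇑x), where ⇑x = {y | x ≪ y}. -/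
open Set TopologicalSpace

variable {X Y : Type*}

/-- for a continuous lattice with `r(v) = ⋁ v↓`, if `A` is Scott open
and `x ≪ ⋀A`, then `φ(A) ⊆ r⁻¹(⇑x)`. -/
theorem phi_subset_preimage_wayUp [CompleteLattice X] (h : IsContinuousLattice X)
    (A : Set X) (hA : IsOpen A) (x : X) (hx : wayBelow x (sInf A)) :
    phi A ⊆ (fun v : OF X => sSup (downOf v.1)) ⁻¹' {y : X | wayBelow x y} := by
  intro v hv I hI hle
  exact hx I hI (le_trans (le_sSup (show sInf A ∈ downOf v.1 from ⟨A, hv, fun a ha => sInf_le ha⟩)) hle)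
end

section
/- Let (X, r) be a Φ-algebra over T0 spaces. Then X with the specialization order is a complete lattice, in which the infimum of any subset A ⊆ X is r([A]), where [A] = {B open | A ⊆ B}. -/
open Set TopologicalSpace

variable {X Y : Type*}

/-- The specialization (pre)order of a topological space:
`x ≤ y` iff every open set containing `x` contains `y`. -/
def sOrd [TopologicalSpace X] (x y : X) : Prop :=
  ∀ A : Set X, IsOpen A → x ∈ A → y ∈ A

lemma exists_basic_of_mem_open [TopologicalSpace X] {U : Set (OF X)} (hU : IsOpen U)
    {u : OF X} (hu : u ∈ U) : ∃ A : Set X, IsOpen A ∧ A ∈ u.1 ∧ phi A ⊆ U := by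
  induction hU with
  | basic S hS =>
      obtain ⟨A, hA, rfl⟩ := hS
      exact ⟨A, hA, hu, subset_rfl⟩
  | univ => exact ⟨Set.univ, isOpen_univ, u.2.2.1, subset_univ _⟩
  | inter S T _ _ ihS ihT =>
      obtain ⟨A, hA, hAu, hAS⟩ := ihS hu.1
      obtain ⟨B, hB, hBu, hBT⟩ := ihT hu.2
      refine ⟨A ∩ B, hA.inter hB, (u.2.2.2 A B hA hB).2 ⟨hAu, hBu⟩, ?_⟩
      rw [phi_inter hA hB]
      exact fun v hv => ⟨hAS hv.1, hBT hv.2⟩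
  | sUnion S _ ih =>
      obtain ⟨T, hT, huT⟩ := hu
      obtain ⟨A, hA, hAu, hAT⟩ := ih T hT huT
      exact ⟨A, hA, hAu, hAT.trans (subset_sUnion_of_mem hT)⟩

lemma r_monotone [TopologicalSpace X] {r : OF X → X} (hc : Continuous r)
    {u v : OF X} (huv : u.1 ⊆ v.1) : sOrd (r u) (r v) := by
  intro U hU hru
  obtain ⟨A, hA, hAu, hsub⟩ := exists_basic_of_mem_open (hU.preimage hc) hru
  exact hsub (huv hAu)

/-- for a `Φ`-algebra `(X, r)` over `T0` spaces, the specialization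
order is a partial order in which every subset `A` has the greatest lower bound
`r([A])`; hence `X` is a complete lattice with `⋀A = r([A])`. -/
theorem specialization_completeLattice [TopologicalSpace X] [T0Space X]
    (r : OF X → X) (hc : Continuous r)
    (hunit : ∀ x : X, r (etaOF x) = x)
    (hassoc : ∀ α : OF (OF X), r (mapOF r hc α) = r (muOF α)) :
    (∀ x y : X, sOrd x y → sOrd y x → x = y) ∧
    ∀ A : Set X,
      (∀ x ∈ A, sOrd (r (nbhdOF A)) x) ∧
      ∀ y : X, (∀ x ∈ A, sOrd y x) → sOrd y (r (nbhdOF A)) := by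
  constructor
  · intro x y hxy hyx
    refine Inseparable.eq ?_
    rw [inseparable_iff_forall_isOpen]
    exact fun U hU => ⟨hxy U hU, hyx U hU⟩
  · intro A
    constructor
    · intro x hx
      have h : (nbhdOF A).1 ⊆ (etaOF x).1 := fun B hB => ⟨hB.1, hB.2 hx⟩
      have := r_monotone hc h
      rwa [hunit] at this
    · intro y hy
      have h : (etaOF y).1 ⊆ (nbhdOF A).1 :=
        fun B hB => ⟨hB.1, fun x hx => hy x hx B hB.1 hB.2⟩
      have := r_monotone hc h
      rwa [hunit] at this
end

section
/- For a directed family 𝒜 of open filters of a T0 space X, the collection 𝒜~ = {W open in Φ(X) | 𝒜 ∩ W ≠ ∅} is an open filter on the space Φ(X), and μ_X(𝒜~) = ⋃𝒜 (the directed supremum of 𝒜 in Φ(X)). -/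
open Set TopologicalSpace

variable {X Y : Type*}

/-- Every open set of `Φ(X)` is an upper set under inclusion. -/
lemma isOpen_upper [TopologicalSpace X] {W : Set (OF X)} (hW : IsOpen W)
    {v w : OF X} (hvw : v ≤ w) (hv : v ∈ W) : w ∈ W := by
  induction hW with
  | basic S hS =>
    obtain ⟨A, -, rfl⟩ := hS
    exact hvw hv
  | univ => trivial
  | inter S T _ _ ihS ihT => exact ⟨ihS hv.1, ihT hv.2⟩
  | sUnion 𝒮 _ ih =>
    obtain ⟨S, hS, hvS⟩ := hv
    exact ⟨S, hS, ih S hS hvS⟩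

/-- for a directed family `𝒜` of open filters of a `T0` space,
`𝒜~ = {W open in Φ(X) | 𝒜 ∩ W ≠ ∅}` is an open filter on `Φ(X)` and
`μ_X(𝒜~) = ⋃𝒜`. -/
theorem tilde_openFilter_mu [TopologicalSpace X] [T0Space X]
    (𝒜 : Set (OF X)) (hne : 𝒜.Nonempty) (hdir : DirectedOn (· ≤ ·) 𝒜) :
    ∃ h : IsOpenFilter {W : Set (OF X) | IsOpen W ∧ (𝒜 ∩ W).Nonempty},
      (muOF (⟨{W : Set (OF X) | IsOpen W ∧ (𝒜 ∩ W).Nonempty}, h⟩ : OF (OF X))).1 =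
        ⋃ v ∈ 𝒜, v.1 := by
  have h : IsOpenFilter {W : Set (OF X) | IsOpen W ∧ (𝒜 ∩ W).Nonempty} := by
    refine ⟨fun W hW => hW.1, ⟨isOpen_univ, hne.imp fun v hv => ⟨hv, trivial⟩⟩, ?_⟩
    intro A B hA hB
    constructor
    · rintro ⟨-, v, hv𝒜, hvA, hvB⟩
      exact ⟨⟨hA, v, hv𝒜, hvA⟩, hB, v, hv𝒜, hvB⟩
    · rintro ⟨⟨-, v, hv𝒜, hvA⟩, -, w, hw𝒜, hwB⟩
      obtain ⟨u, hu𝒜, hvu, hwu⟩ := hdir v hv𝒜 w hw𝒜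
      exact ⟨hA.inter hB, u, hu𝒜, isOpen_upper hA hvu hvA, isOpen_upper hB hwu hwB⟩
  refine ⟨h, ?_⟩
  ext A
  simp only [muOF, mem_setOf_eq, mem_iUnion]
  constructor
  · rintro ⟨hA, -, v, hv𝒜, hvA⟩
    exact ⟨v, hv𝒜, hvA⟩
  · rintro ⟨v, hv𝒜, hvA⟩
    exact ⟨v.2.1 A hvA, isOpen_phi (v.2.1 A hvA), v, hv𝒜, hvA⟩
end

section
/- Let (X, r) be a Φ-algebra over T0 spaces. Then r : Φ(X) → X preserves suprema of directed families: for every directed family 𝒜 of open filters, r(⋃𝒜) = ⋁ r(𝒜), where the supremum on the right is taken in the complete lattice (X, specialization order). -/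
open Set TopologicalSpace

variable {X Y : Type*}

/-- Open sets of `Φ(X)` are upward closed for filter inclusion. -/
lemma gen_up [TopologicalSpace X] {S : Set (OF X)}
    (hS : GenerateOpen {S | ∃ A : Set X, IsOpen A ∧ S = phi A} S)
    {v w : OF X} (hv : v ∈ S) (hvw : v.1 ⊆ w.1) : w ∈ S := by
  induction hS with
  | basic s hs => obtain ⟨A, -, rfl⟩ := hs; exact hvw hv
  | univ => trivial
  | inter s t _ _ ihs iht => exact ⟨ihs hv.1, iht hv.2⟩
  | sUnion 𝒮 _ ih =>
    obtain ⟨s, hs, hvs⟩ := hv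
    exact ⟨s, hs, ih s hs hvs⟩

/-- If an open set of `Φ(X)` contains the union of a directed family of open
filters, it contains some member of the family. -/
lemma gen_directed [TopologicalSpace X] {𝒜 : Set (OF X)} (hne : 𝒜.Nonempty)
    (hdir : DirectedOn (· ≤ ·) 𝒜) {S : Set (OF X)}
    (hS : GenerateOpen {S | ∃ A : Set X, IsOpen A ∧ S = phi A} S)
    {U : OF X} (hUdef : U.1 = ⋃ v ∈ 𝒜, v.1) (hU : U ∈ S) :
    ∃ v ∈ 𝒜, v ∈ S := by
  induction hS with
  | basic s hs =>
    obtain ⟨A, -, rfl⟩ := hs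
    have : A ∈ ⋃ v ∈ 𝒜, v.1 := hUdef ▸ hU
    simpa [phi] using this
  | univ => exact ⟨hne.choose, hne.choose_spec, trivial⟩
  | inter s t hs ht ihs iht =>
    obtain ⟨v₁, hv₁, hv₁s⟩ := ihs hU.1
    obtain ⟨v₂, hv₂, hv₂t⟩ := iht hU.2
    obtain ⟨w, hw, hw₁, hw₂⟩ := hdir v₁ hv₁ v₂ hv₂
    exact ⟨w, hw, gen_up hs hv₁s hw₁, gen_up ht hv₂t hw₂⟩
  | sUnion 𝒮 h𝒮 ih =>
    obtain ⟨s, hs, hUs⟩ := hU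
    obtain ⟨v, hv, hvs⟩ := ih s hs hUs
    exact ⟨v, hv, s, hs, hvs⟩

/-- the structure map of a `Φ`-algebra over `T0` spaces preserves
directed suprema: for a directed family `𝒜` of open filters, `r(⋃𝒜)` is the
supremum of `r(𝒜)` in the specialization order. -/
theorem r_preserves_directed_sups [TopologicalSpace X] [T0Space X]
    (r : OF X → X) (hc : Continuous r)
    (hunit : ∀ x : X, r (etaOF x) = x)
    (hassoc : ∀ α : OF (OF X), r (mapOF r hc α) = r (muOF α))
    (𝒜 : Set (OF X)) (hne : 𝒜.Nonempty) (hdir : DirectedOn (· ≤ ·) 𝒜) :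
    ∃ hU : IsOpenFilter (⋃ v ∈ 𝒜, v.1),
      (∀ v ∈ 𝒜, sOrd (r v) (r (⟨⋃ v ∈ 𝒜, v.1, hU⟩ : OF X))) ∧
      ∀ y : X, (∀ v ∈ 𝒜, sOrd (r v) y) →
        sOrd (r (⟨⋃ v ∈ 𝒜, v.1, hU⟩ : OF X)) y := by
  have hU : IsOpenFilter (⋃ v ∈ 𝒜, v.1) := by
    refine ⟨?_, ?_, ?_⟩
    · rintro A hA
      simp only [Set.mem_iUnion] at hA
      obtain ⟨v, -, hv⟩ := hA
      exact v.2.1 A hv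
    · obtain ⟨v, hv⟩ := hne
      exact Set.mem_iUnion.2 ⟨v, Set.mem_iUnion.2 ⟨hv, v.2.2.1⟩⟩
    · intro A B hA hB
      constructor
      · intro h
        simp only [Set.mem_iUnion] at h ⊢
        obtain ⟨v, hv, hmem⟩ := h
        have := (v.2.2.2 A B hA hB).1 hmem
        exact ⟨⟨v, hv, this.1⟩, ⟨v, hv, this.2⟩⟩
      · rintro ⟨h1, h2⟩
        simp only [Set.mem_iUnion] at h1 h2 ⊢
        obtain ⟨v₁, hv₁, hA1⟩ := h1
        obtain ⟨v₂, hv₂, hB2⟩ := h2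
        obtain ⟨w, hw, hw₁, hw₂⟩ := hdir v₁ hv₁ v₂ hv₂
        exact ⟨w, hw, (w.2.2.2 A B hA hB).2 ⟨hw₁ hA1, hw₂ hB2⟩⟩
  refine ⟨hU, ?_, ?_⟩
  · intro v hv A hA hrv
    have hpre : GenerateOpen {S | ∃ A : Set X, IsOpen A ∧ S = phi A} (r ⁻¹' A) :=
      hc.isOpen_preimage A hA
    exact gen_up hpre (v := v) hrv (fun B hB => Set.mem_iUnion.2 ⟨v, Set.mem_iUnion.2 ⟨hv, hB⟩⟩)
  · intro y hy A hA hrU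
    have hpre : GenerateOpen {S | ∃ A : Set X, IsOpen A ∧ S = phi A} (r ⁻¹' A) :=
      hc.isOpen_preimage A hA
    obtain ⟨v, hv, hvS⟩ := gen_directed hne hdir hpre
      (U := (⟨⋃ v ∈ 𝒜, v.1, hU⟩ : OF X)) rfl hrU
    exact hy v hv A hA hvS
end

section
/- Let (X, r) be a Φ-algebra over T0 spaces. Then for every open filter v, r(v) = ⋁ v↓ (supremum in the specialization order), where v↓ = ⋃_{A∈v} {y | A ⊆ ↑y}; consequently X with the specialization order is a continuous lattice. -/
open Set TopologicalSpace

variable {X Y : Type*}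

/-- `v↓` relative to the specialization order:
`{y | ∃ A ∈ v, A ⊆ ↑y}` where `↑y = {z | y ≤ z}` in the specialization order. -/
def sDownOf [TopologicalSpace X] (v : Set (Set X)) : Set X :=
  {y | ∃ A ∈ v, ∀ z ∈ A, sOrd y z}

/-- Least upper bound relative to the specialization order. -/
def sIsLUB [TopologicalSpace X] (S : Set X) (s : X) : Prop :=
  (∀ x ∈ S, sOrd x s) ∧ ∀ y : X, (∀ x ∈ S, sOrd x y) → sOrd s y

/-- Ideal relative to the specialization order. -/
def sIdeal [TopologicalSpace X] (I : Set X) : Prop :=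
  I.Nonempty ∧ (∀ a ∈ I, ∀ b ∈ I, ∃ c ∈ I, sOrd a c ∧ sOrd b c) ∧
    ∀ a b : X, sOrd a b → b ∈ I → a ∈ I

/-- Way-below relative to the specialization order. -/
def sWayBelow [TopologicalSpace X] (x y : X) : Prop :=
  ∀ I : Set X, sIdeal I → ∀ s : X, sIsLUB I s → sOrd y s → x ∈ I

/-- Open filters are upward closed. -/
lemma OF.upward [TopologicalSpace X] (v : OF X) {A B : Set X} (hA : A ∈ v.1)
    (hB : IsOpen B) (hAB : A ⊆ B) : B ∈ v.1 := by
  have h : A ∩ B ∈ v.1 := by rwa [Set.inter_eq_left.mpr hAB]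
  exact ((v.2.2.2 A B (v.2.1 A hA) hB).1 h).2

/-- The sets `phi B`, `B ∈ v`, form a neighborhood basis at `v`. -/
lemma OF.basis [TopologicalSpace X] {U : Set (OF X)} (hU : IsOpen U) :
    ∀ v ∈ U, ∃ B : Set X, IsOpen B ∧ B ∈ v.1 ∧ phi B ⊆ U := by
  have hU' : TopologicalSpace.GenerateOpen {S | ∃ A : Set X, IsOpen A ∧ S = phi A} U := hU
  clear hU
  induction hU' with
  | basic S hS =>
    obtain ⟨A, hA, rfl⟩ := hS
    exact fun v hv => ⟨A, hA, hv, subset_rfl⟩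
  | univ => exact fun v _ => ⟨Set.univ, isOpen_univ, v.2.2.1, subset_univ _⟩
  | inter U V _ _ ihU ihV =>
    intro v hv
    obtain ⟨B, hB, hBv, hBU⟩ := ihU v hv.1
    obtain ⟨C, hC, hCv, hCV⟩ := ihV v hv.2
    refine ⟨B ∩ C, hB.inter hC, (v.2.2.2 B C hB hC).2 ⟨hBv, hCv⟩, ?_⟩
    rw [phi_inter hB hC]
    exact fun w hw => ⟨hBU hw.1, hCV hw.2⟩
  | sUnion S _ ih =>
    intro v hv
    obtain ⟨U, hUS, hvU⟩ := hv
    obtain ⟨B, h1, h2, h3⟩ := ih U hUS v hvU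
    exact ⟨B, h1, h2, h3.trans (subset_sUnion_of_mem hUS)⟩

/-- The structure map of an algebra is monotone for the specialization order. -/
lemma r_mono [TopologicalSpace X] {r : OF X → X} (hc : Continuous r)
    {v w : OF X} (h : v.1 ⊆ w.1) : sOrd (r v) (r w) := by
  intro A hA hv
  obtain ⟨B, _, hBv, hBsub⟩ := OF.basis (hA.preimage hc) v hv
  exact hBsub (h hBv)

/-- Key lemma: if `r v ∈ A` for `A` open, then `A ∈ v`. -/
lemma key_mem [TopologicalSpace X] {r : OF X → X} (hc : Continuous r)
    (hunit : ∀ x : X, r (etaOF x) = x) (v : OF X) {A : Set X}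
    (hA : IsOpen A) (h : r v ∈ A) : A ∈ v.1 := by
  obtain ⟨B, hB, hBv, hBsub⟩ := OF.basis (hA.preimage hc) v h
  refine OF.upward v hBv hA (fun x hx => ?_)
  have hx' : etaOF x ∈ phi B := ⟨hB, hx⟩
  have h2 : r (etaOF x) ∈ A := hBsub hx'
  rwa [hunit x] at h2

/-- The open filter on `Φ(X)` generated by the sets `phi A`, `A ∈ v`. -/
def genFilter [TopologicalSpace X] (v : OF X) : OF (OF X) :=
  ⟨{U | IsOpen U ∧ ∃ A ∈ v.1, phi A ⊆ U}, fun _ h => h.1,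
   ⟨isOpen_univ, Set.univ, v.2.2.1, subset_univ _⟩,
   fun U V hU hV =>
     ⟨fun h => by
        obtain ⟨_, A, hAv, hAsub⟩ := h
        exact ⟨⟨hU, A, hAv, hAsub.trans inter_subset_left⟩,
               ⟨hV, A, hAv, hAsub.trans inter_subset_right⟩⟩,
      fun h => by
        obtain ⟨⟨_, A, hAv, hA⟩, ⟨_, B, hBv, hB⟩⟩ := h
        refine ⟨hU.inter hV, A ∩ B,
          (v.2.2.2 A B (v.2.1 A hAv) (v.2.1 B hBv)).2 ⟨hAv, hBv⟩, ?_⟩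
        rw [phi_inter (v.2.1 A hAv) (v.2.1 B hBv)]
        exact fun w hw => ⟨hA hw.1, hB hw.2⟩⟩⟩

lemma mu_genFilter [TopologicalSpace X] (v : OF X) : muOF (genFilter v) = v := by
  refine Subtype.ext (Set.ext fun A => ⟨?_, ?_⟩)
  · rintro ⟨hA, _, B, hBv, hsub⟩
    have hB : IsOpen B := v.2.1 B hBv
    have hmem : nbhdOF B ∈ phi B := ⟨hB, subset_rfl⟩
    have : A ∈ (nbhdOF B).1 := hsub hmem
    exact OF.upward v hBv hA this.2
  · intro hA
    have hA' : IsOpen A := v.2.1 A hA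
    exact ⟨hA', isOpen_phi hA', A, hA, subset_rfl⟩

/-- The open filter of open sets meeting a directed set `I`. -/
def meetFilter [TopologicalSpace X] (I : Set X) (hI : sIdeal I) : OF X :=
  ⟨{B | IsOpen B ∧ (I ∩ B).Nonempty}, fun _ h => h.1,
   ⟨isOpen_univ, hI.1.imp fun a ha => ⟨ha, trivial⟩⟩,
   fun A B hA hB =>
     ⟨fun h => by
        obtain ⟨_, z, hzI, hzA, hzB⟩ := h
        exact ⟨⟨hA, z, hzI, hzA⟩, ⟨hB, z, hzI, hzB⟩⟩,
      fun h => by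
        obtain ⟨⟨_, a, haI, haA⟩, ⟨_, b, hbI, hbB⟩⟩ := h
        obtain ⟨c, hcI, hac, hbc⟩ := hI.2.1 a haI b hbI
        exact ⟨hA.inter hB, c, hcI, hac A hA haA, hbc B hB hbB⟩⟩⟩

/-- for a `Φ`-algebra `(X, r)` over `T0` spaces, `r(v) = ⋁ v↓` in the
specialization order for every open filter `v`; consequently `X` with the
specialization order is a continuous lattice (every element is the sup of the
elements way below it). -/
theorem r_eq_sup_down_and_continuousLattice [TopologicalSpace X] [T0Space X]
    (r : OF X → X) (hc : Continuous r)
    (hunit : ∀ x : X, r (etaOF x) = x)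
    (hassoc : ∀ α : OF (OF X), r (mapOF r hc α) = r (muOF α)) :
    (∀ v : OF X, sIsLUB (sDownOf v.1) (r v)) ∧
    ∀ x : X, sIsLUB {y : X | sWayBelow y x} x := by
  have h1 : ∀ v : OF X, sIsLUB (sDownOf v.1) (r v) := by
    intro v
    constructor
    · -- upper bound
      rintro y ⟨A, hAv, hlow⟩
      have hsub : (etaOF y).1 ⊆ v.1 := by
        rintro B ⟨hB, hyB⟩
        exact OF.upward v hAv hB (fun z hz => hlow z hz B hB hyB)
      have := r_mono hc hsub
      rwa [hunit y] at this
    · -- least upper bound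
      intro u hu
      have key2 : ∀ A ∈ v.1, sOrd (r (nbhdOF A)) u := by
        intro A hAv
        refine hu _ ⟨A, hAv, fun z hz => ?_⟩
        have hsub : (nbhdOF A).1 ⊆ (etaOF z).1 := by
          rintro C ⟨hC, hAC⟩
          exact ⟨hC, hAC hz⟩
        have := r_mono hc hsub
        rwa [hunit z] at this
      have hs : (mapOF r hc (genFilter v)).1 ⊆ (etaOF u).1 := by
        rintro B ⟨hB, _, A, hAv, hsub⟩
        refine ⟨hB, ?_⟩
        have hm : r (nbhdOF A) ∈ B := hsub ⟨v.2.1 A hAv, subset_rfl⟩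
        exact key2 A hAv B hB hm
      have := r_mono hc hs
      rwa [hassoc, mu_genFilter, hunit u] at this
  refine ⟨h1, fun x => ⟨?_, ?_⟩⟩
  · -- every element way below x is below x
    intro y hy
    have hIdeal : sIdeal {z : X | sOrd z x} :=
      ⟨⟨x, fun _ _ h => h⟩,
       fun a ha b hb => ⟨x, fun _ _ h => h, ha, hb⟩,
       fun a b hab hbx A hA ha => hbx A hA (hab A hA ha)⟩
    have hLUB : sIsLUB {z : X | sOrd z x} x :=
      ⟨fun z hz => hz, fun u hu => hu x (fun _ _ h => h)⟩
    exact hy _ hIdeal x hLUB (fun _ _ h => h)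
  · -- x is the least upper bound of the way-below elements
    intro u hu
    have hwb : ∀ y ∈ sDownOf (etaOF x).1, sWayBelow y x := by
      rintro y ⟨A, ⟨hAopen, hxA⟩, hlow⟩
      intro I hI s hs hxs
      set w := meetFilter I hI with hw
      -- s ≤ r w
      have hsrw : sOrd s (r w) := by
        refine hs.2 (r w) (fun a haI => ?_)
        have hsub : (etaOF a).1 ⊆ w.1 := by
          rintro B ⟨hB, haB⟩
          exact ⟨hB, a, haI, haB⟩
        have := r_mono hc hsub
        rwa [hunit a] at this
      have hsA : s ∈ A := hxs A hAopen hxA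
      have hrwA : r w ∈ A := hsrw A hAopen hsA
      obtain ⟨_, z, hzI, hzA⟩ := key_mem hc hunit w hAopen hrwA
      exact hI.2.2 y z (hlow z hzA) hzI
    have := (h1 (etaOF x)).2 u (fun y hy => hu y (hwb y hy))
    rwa [hunit x] at this
end
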